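/- Let A be a finite type, M an additive commutative monoid, and w : A → M. Then there exists m ∈ ℕ such that for all n ≥ m: the group of φ-conservative permutations of (Fin n → A) equals the subgroup of Perm(Fin n → A) generated by the transpositions (x y) of pairs of distinct words x, y : Fin n → A that agree on all coordinates outside some m-element subset S of Fin n and satisfy ∑_{i ∈ S} w(x i) = ∑_{i ∈ S} w(y i). -/

import Mathlib

/-- The φ-weight of a word `x : Fin n → A` with respect to a symbol weighting
`w : A → M` into an additive commutative monoid. -/
def phiWeight {A M : Type*} [AddCommMonoid M] (w : A → M) {n : ℕ}
    (x : Fin n → A) : M :=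
  ∑ i, w (x i)


open Finset

namespace PhiCons

variable {A : Type*} [Fintype A] [DecidableEq A]

/-- The monomial `X^u` for an exponent vector `u : A → ℕ`. -/
noncomputable def mon (u : A → ℕ) : MvPolynomial A ℚ :=
  MvPolynomial.monomial (Finsupp.equivFunOnFinite.symm u) 1

lemma prod_single {ι : Type*} {Q : Type*} [AddCommMonoid Q] (s : Finset ι) (g : ι → Q) :
    (∏ i ∈ s, AddMonoidAlgebra.single (g i) (1:ℚ)) =
      AddMonoidAlgebra.single (∑ i ∈ s, g i) 1 := by
  classical
  induction s using Finset.induction_on with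
  | empty => simp [AddMonoidAlgebra.one_def]
  | insert _ _ hnot ih =>
      rw [Finset.prod_insert hnot, ih, Finset.sum_insert hnot,
        AddMonoidAlgebra.single_mul_single, one_mul]

lemma aeval_mon (c' : AddCon (A → ℕ)) (u : A → ℕ) :
    (MvPolynomial.aeval fun a =>
        (AddMonoidAlgebra.single (c'.mk' (Pi.single a 1)) (1:ℚ) : AddMonoidAlgebra ℚ c'.Quotient)) (mon u)
      = AddMonoidAlgebra.single (c'.mk' u) 1 := by
  classical
  rw [mon, MvPolynomial.aeval_monomial, map_one, one_mul]
  rw [Finsupp.prod_fintype]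
  · have h1 : ∀ a : A, ((AddMonoidAlgebra.single (c'.mk' (Pi.single a 1)) (1:ℚ) : AddMonoidAlgebra ℚ c'.Quotient))
        ^ ((Finsupp.equivFunOnFinite.symm u) a)
        = AddMonoidAlgebra.single ((u a) • c'.mk' (Pi.single a 1)) 1 := by
      intro a
      rw [AddMonoidAlgebra.single_pow, one_pow]
      simp [Finsupp.equivFunOnFinite]
    simp only [h1]
    rw [prod_single]
    congr 1
    have hu : u = ∑ a : A, Pi.single a (u a) := (Finset.univ_sum_single u).symm
    conv_rhs => rw [hu]
    rw [map_sum]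
    refine Finset.sum_congr rfl ?_
    intro a _
    have : (Pi.single a (u a) : A → ℕ) = (u a) • Pi.single a 1 := by
      ext b
      by_cases hb : b = a
      · subst hb; simp
      · simp [Pi.single_apply, hb]
    rw [this, map_nsmul]
  · intro a; simp

/-- **Rédei's theorem**: every additive congruence on `A → ℕ` (A finite) is finitely
generated. -/
theorem redei (c : AddCon (A → ℕ)) :
    ∃ P : Finset ((A → ℕ) × (A → ℕ)), (∀ g ∈ P, c g.1 g.2) ∧
      addConGen (fun u v => (u, v) ∈ P) = c := by
  classical
  set bin : (A → ℕ) × (A → ℕ) → MvPolynomial A ℚ := fun g => mon g.1 - mon g.2 with hbin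
  set Sset : Set (MvPolynomial A ℚ) := bin '' {g | c g.1 g.2} with hSset
  set I : Ideal (MvPolynomial A ℚ) := Ideal.span Sset with hI
  have hIfg : I.FG := (isNoetherianRing_iff_ideal_fg _).mp inferInstance I
  obtain ⟨G, hG⟩ := hIfg
  -- each generator is in the span of a finite subset of Sset
  have hmem : ∀ x ∈ G, ∃ T : Finset (MvPolynomial A ℚ), ↑T ⊆ Sset ∧
      x ∈ Submodule.span (MvPolynomial A ℚ) (↑T : Set (MvPolynomial A ℚ)) := by
    intro x hx
    have : x ∈ Submodule.span (MvPolynomial A ℚ) Sset := by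
      rw [← Ideal.span]; rw [← hI, ← hG]; exact Ideal.subset_span hx
    exact Submodule.mem_span_finite_of_mem_span this
  choose T hTsub hTmem using hmem
  set Tall : Finset (MvPolynomial A ℚ) := G.attach.biUnion (fun x => T x.1 x.2) with hTall
  have hTallsub : (↑Tall : Set (MvPolynomial A ℚ)) ⊆ Sset := by
    intro y hy
    simp only [hTall, Finset.coe_biUnion, Set.mem_iUnion] at hy
    obtain ⟨x, hx, hy⟩ := hy
    exact hTsub x.1 x.2 hy
  have hspan : I ≤ Ideal.span (↑Tall : Set (MvPolynomial A ℚ)) := by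
    rw [← hG, Ideal.span_le]
    intro x hx
    have : x ∈ Submodule.span (MvPolynomial A ℚ) (↑(T x hx) : Set (MvPolynomial A ℚ)) :=
      hTmem x hx
    refine Submodule.span_mono ?_ this
    intro y hy
    simp only [hTall, Finset.coe_biUnion, Set.mem_iUnion]
    exact ⟨⟨x, hx⟩, by simp, hy⟩
  -- choose pairs for each element of Tall
  have hchoose : ∀ y : {y // y ∈ Tall}, ∃ g : (A → ℕ) × (A → ℕ), c g.1 g.2 ∧ bin g = y.1 := by
    intro y
    have := hTallsub y.2
    rw [hSset] at this
    obtain ⟨g, hg, hgy⟩ := this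
    exact ⟨g, hg, hgy⟩
  choose pf hpf1 hpf2 using hchoose
  set P : Finset ((A → ℕ) × (A → ℕ)) := Tall.attach.image pf with hP
  refine ⟨P, ?_, ?_⟩
  · intro g hg
    simp only [hP, Finset.mem_image] at hg
    obtain ⟨y, _, rfl⟩ := hg
    exact hpf1 y
  · set c' := addConGen (fun u v => (u, v) ∈ P) with hc'
    apply le_antisymm
    · exact AddCon.addConGen_le.mpr (by
        intro u v huv
        simp only [hP, Finset.mem_image] at huv
        obtain ⟨y, _, hy⟩ := huv
        have := hpf1 y
        rw [hy] at this
        exact this)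
    · -- c ≤ c'
      intro u v hc
      set φ : MvPolynomial A ℚ →ₐ[ℚ] AddMonoidAlgebra ℚ c'.Quotient := (MvPolynomial.aeval fun a =>
        (AddMonoidAlgebra.single (c'.mk' (Pi.single a 1)) (1:ℚ) : AddMonoidAlgebra ℚ c'.Quotient)) with hφ
      have hker : ∀ y ∈ Tall, φ y = 0 := by
        intro y hy
        have h2 : bin (pf ⟨y, hy⟩) = y := hpf2 ⟨y, hy⟩
        have h1 : c' (pf ⟨y, hy⟩).1 (pf ⟨y, hy⟩).2 := by
          apply AddConGen.Rel.of
          simp only [hP, Finset.mem_image]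
          exact ⟨⟨y, hy⟩, Finset.mem_attach _ _, rfl⟩
        rw [← h2, hbin]
        simp only [map_sub, hφ]
        rw [aeval_mon, aeval_mon]
        have : c'.mk' (pf ⟨y, hy⟩).1 = c'.mk' (pf ⟨y, hy⟩).2 := by
          exact (AddCon.eq c').mpr h1
        rw [this, sub_self]
      have hbinuv : bin (u, v) ∈ I := by
        rw [hI]
        exact Ideal.subset_span ⟨(u, v), hc, rfl⟩
      have hmem2 : bin (u, v) ∈ Ideal.span (↑Tall : Set (MvPolynomial A ℚ)) := hspan hbinuv
      have hφ0 : φ (bin (u, v)) = 0 := by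
        have hle : Ideal.span (↑Tall : Set (MvPolynomial A ℚ)) ≤ RingHom.ker φ.toRingHom := by
          rw [Ideal.span_le]
          intro y hy
          exact hker y hy
        exact hle hmem2
      rw [hbin] at hφ0
      simp only [map_sub, hφ] at hφ0
      rw [aeval_mon, aeval_mon, sub_eq_zero] at hφ0
      have : c'.mk' u = c'.mk' v := by
        exact (AddMonoidAlgebra.single_left_inj (one_ne_zero)).mp hφ0
      exact (AddCon.eq c').mp this

end PhiCons
section Part2

open Finset

namespace PhiCons

variable {A : Type*} [Fintype A] [DecidableEq A] {M : Type*} [AddCommMonoid M]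

/-- Parikh vector of a word. -/
def parikh {n : ℕ} (x : Fin n → A) : A → ℕ :=
  fun a => (univ.filter fun i => x i = a).card

/-- fiberwise sum formula -/
lemma sum_weight_eq (w : A → M) {n : ℕ} (x : Fin n → A) (S : Finset (Fin n)) :
    ∑ i ∈ S, w (x i) = ∑ a, (S.filter fun i => x i = a).card • w a := by
  rw [← Finset.sum_fiberwise S (fun i => x i) (fun i => w (x i))]
  refine Finset.sum_congr rfl ?_
  intro a _
  rw [Finset.sum_congr rfl (fun i hi => by
    rw [(Finset.mem_filter.mp hi).2]), Finset.sum_const]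

lemma sum_parikh {n : ℕ} (x : Fin n → A) : ∑ a, parikh x a = n := by
  have := Finset.sum_fiberwise (univ : Finset (Fin n)) (fun i => x i) (fun _ => 1)
  simpa [parikh] using this

/-- The generating relation: `x ≠ y`, agree outside a set of `m` coordinates,
with equal local weights. -/
def IsGen (w : A → M) (m : ℕ) {n : ℕ} (x y : Fin n → A) : Prop :=
  x ≠ y ∧ ∃ S : Finset (Fin n), S.card = m ∧ (∀ i ∉ S, x i = y i) ∧
    ∑ i ∈ S, w (x i) = ∑ i ∈ S, w (y i)

lemma IsGen.symm {w : A → M} {m n : ℕ} {x y : Fin n → A} (h : IsGen w m x y) :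
    IsGen w m y x := by
  obtain ⟨hne, S, hS, hout, hsum⟩ := h
  exact ⟨hne.symm, S, hS, fun i hi => (hout i hi).symm, hsum.symm⟩

/-- Reachability by generating moves. -/
def Reach (w : A → M) (m : ℕ) {n : ℕ} (x y : Fin n → A) : Prop :=
  Relation.ReflTransGen (IsGen w m) x y

lemma Reach.trans {w : A → M} {m n : ℕ} {x y z : Fin n → A}
    (h1 : Reach w m x y) (h2 : Reach w m y z) : Reach w m x z :=
  Relation.ReflTransGen.trans h1 h2

/-- A move on at most `m` coordinates gives reachability (pad the set to `m`). -/
lemma smallStep {w : A → M} {m n : ℕ} (hmn : m ≤ n) {x y : Fin n → A}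
    (S : Finset (Fin n)) (hS : S.card ≤ m) (hout : ∀ i ∉ S, x i = y i)
    (hsum : ∑ i ∈ S, w (x i) = ∑ i ∈ S, w (y i)) : Reach w m x y := by
  by_cases hxy : x = y
  · subst hxy; exact Relation.ReflTransGen.refl
  · obtain ⟨T, hST, hT⟩ := Finset.exists_superset_card_eq hS
      (by simpa [Fintype.card_fin] using hmn)
    refine Relation.ReflTransGen.single ⟨hxy, T, hT, ?_, ?_⟩
    · intro i hi
      exact hout i (fun hiS => hi (hST hiS))
    · rw [← Finset.sum_sdiff hST, ← Finset.sum_sdiff hST, hsum]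
      congr 1
      refine Finset.sum_congr rfl ?_
      intro i hi
      rw [hout i (Finset.mem_sdiff.mp hi).2]

/-- parikh is invariant under precomposition with a permutation. -/
lemma parikh_comp_perm {n : ℕ} (x : Fin n → A) (e : Equiv.Perm (Fin n)) :
    parikh (fun i => x (e i)) = parikh x := by
  funext a
  unfold parikh
  apply Finset.card_bij' (fun i _ => e i) (fun i _ => e.symm i)
  · intro i hi
    simp only [Finset.mem_filter, Finset.mem_univ, true_and] at hi ⊢
    exact hi
  · intro i hi
    simp only [Finset.mem_filter, Finset.mem_univ, true_and] at hi ⊢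
    simpa using hi
  · intro i _; simp
  · intro i _; simp

/-- Words with the same Parikh vector are connected by moves. -/
lemma reach_of_parikh_eq {w : A → M} {m n : ℕ} (h2 : 2 ≤ m) (hmn : m ≤ n) :
    ∀ (k : ℕ) (x y : Fin n → A), (univ.filter fun i => x i ≠ y i).card ≤ k →
      parikh x = parikh y → Reach w m x y := by
  intro k
  induction k with
  | zero =>
      intro x y hcard _
      have : x = y := by
        funext i
        by_contra hne
        have : i ∈ univ.filter fun i => x i ≠ y i := by simp [hne]
        have := Finset.card_pos.mpr ⟨i, this⟩
        omega
      subst this; exact Relation.ReflTransGen.refl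
  | succ k ih =>
      intro x y hcard hpar
      by_cases hxy : x = y
      · subst hxy; exact Relation.ReflTransGen.refl
      · have hex : ∃ i, x i ≠ y i := by
          by_contra hno
          push_neg at hno
          exact hxy (funext hno)
        obtain ⟨i, hi⟩ := hex
        set a := y i with ha
        have hxia : x i ≠ a := hi
        -- find j with x j = a, y j ≠ a
        have hj : ∃ j, x j = a ∧ y j ≠ a := by
          by_contra hno
          push_neg at hno
          have hsub : (univ.filter fun k => x k = a) ⊆ (univ.filter fun k => y k = a) := by
            intro k hk
            simp only [Finset.mem_filter, Finset.mem_univ, true_and] at hk ⊢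
            exact hno k hk
          have hcards : (univ.filter fun k => x k = a).card
              = (univ.filter fun k => y k = a).card := congrFun hpar a
          have heq := Finset.eq_of_subset_of_card_le hsub (le_of_eq hcards.symm)
          have hiy : i ∈ univ.filter fun k => y k = a := by simp [ha]
          rw [← heq] at hiy
          simp only [Finset.mem_filter, Finset.mem_univ, true_and] at hiy
          exact hxia hiy
        obtain ⟨j, hxj, hyj⟩ := hj
        have hij : j ≠ i := fun h => hxia (h ▸ hxj)
        set x' : Fin n → A := fun k => x (Equiv.swap i j k) with hx'
        have hstep : Reach w m x x' := by
          apply smallStep hmn ({i, j} : Finset (Fin n))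
          · exact le_trans (Finset.card_insert_le _ _)
              (by simpa using Nat.succ_le_succ (le_of_eq (Finset.card_singleton j)) |>.trans h2)
          · intro k hk
            simp only [Finset.mem_insert, Finset.mem_singleton, not_or] at hk
            rw [hx']
            simp [Equiv.swap_apply_of_ne_of_ne hk.1 hk.2]
          · rw [Finset.sum_pair (Ne.symm hij), Finset.sum_pair (Ne.symm hij), hx']
            simp [Equiv.swap_apply_left, Equiv.swap_apply_right, add_comm]
        have hpar' : parikh x' = parikh y := by
          rw [hx', parikh_comp_perm x (Equiv.swap i j)]; exact hpar
        have hsub : (univ.filter fun k => x' k ≠ y k)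
            ⊆ (univ.filter fun k => x k ≠ y k).erase i := by
          intro k hk
          simp only [Finset.mem_filter, Finset.mem_univ, true_and] at hk
          rw [Finset.mem_erase]
          constructor
          · rintro rfl
            apply hk
            rw [hx']
            simp [Equiv.swap_apply_left, hxj, ha]
          · simp only [Finset.mem_filter, Finset.mem_univ, true_and]
            by_cases hkj : k = j
            · subst hkj
              intro hyk
              exact hyj (hxj ▸ hyk ▸ rfl)
            · by_cases hki : k = i
              · subst hki
                intro _
                apply hk
                rw [hx']
                simp [Equiv.swap_apply_left, hxj, ha]
              · intro hxk
                apply hk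
                show x (Equiv.swap i j k) = y k
                rw [Equiv.swap_apply_of_ne_of_ne hki hkj]
                exact hxk
        have hcard' : (univ.filter fun k => x' k ≠ y k).card ≤ k := by
          have h1 := Finset.card_le_card hsub
          have h2' : i ∈ univ.filter fun k => x k ≠ y k := by simp; exact hi
          have h3 := Finset.card_erase_of_mem h2'
          omega
        exact (hstep.trans (ih x' y hcard' hpar'))

end PhiCons
end Part2
section Part3

open Finset

namespace PhiCons

variable {A : Type*} [Fintype A] [DecidableEq A] {M : Type*} [AddCommMonoid M]

/-- One can modify a word on a finset `s` so as to realize any prescribed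
fiber counts `v` on `s` (with the right total). -/
lemma exists_fill {n : ℕ} : ∀ (N : ℕ) (v : A → ℕ) (s : Finset (Fin n)) (z : Fin n → A),
    (∑ a, v a) = N → s.card = N →
    ∃ z' : Fin n → A, (∀ i ∉ s, z' i = z i) ∧
      ∀ a, (s.filter fun i => z' i = a).card = v a := by
  intro N
  induction N with
  | zero =>
      intro v s z hv hs
      refine ⟨z, fun i _ => rfl, ?_⟩
      intro a
      have hva : v a = 0 := by
        by_contra h
        have : 0 < ∑ a, v a := Finset.sum_pos' (fun _ _ => Nat.zero_le _)
          ⟨a, Finset.mem_univ a, Nat.pos_of_ne_zero h⟩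
        omega
      have : s = ∅ := Finset.card_eq_zero.mp hs
      rw [this, hva]
      simp
  | succ N ih =>
      intro v s z hv hs
      have hex : ∃ a0, v a0 ≠ 0 := by
        by_contra h
        push_neg at h
        simp only [h, Finset.sum_const_zero] at hv
        omega
      obtain ⟨a0, ha0⟩ := hex
      have hsne : s.Nonempty := Finset.card_pos.mp (by omega)
      obtain ⟨i, hi⟩ := hsne
      set v' := Function.update v a0 (v a0 - 1) with hv'
      have hsum' : (∑ a, v' a) = N := by
        rw [hv', Finset.sum_update_of_mem (Finset.mem_univ a0)]
        have h2 : ∑ x ∈ univ \ {a0}, v x + v a0 = N + 1 := by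
          rw [← Finset.sum_eq_sum_sdiff_singleton_add (Finset.mem_univ a0)]
          exact hv
        omega
      obtain ⟨z'', hz''out, hz''cnt⟩ := ih v' (s.erase i) z hsum'
        (by rw [Finset.card_erase_of_mem hi]; omega)
      refine ⟨Function.update z'' i a0, ?_, ?_⟩
      · intro j hj
        have hji : j ≠ i := fun h => hj (h ▸ hi)
        rw [Function.update_of_ne hji]
        exact hz''out j (fun hj' => hj (Finset.mem_of_mem_erase hj'))
      · intro a
        have hins : s = insert i (s.erase i) := (Finset.insert_erase hi).symm
        have hfe : ((s.erase i).filter fun k => Function.update z'' i a0 k = a)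
            = ((s.erase i).filter fun k => z'' k = a) := by
          apply Finset.filter_congr
          intro k hk
          rw [Function.update_of_ne (Finset.ne_of_mem_erase hk)]
        rw [hins, Finset.filter_insert]
        by_cases haa : a = a0
        · subst haa
          rw [if_pos (by simp only [Function.update_self])]
          rw [Finset.card_insert_of_notMem (fun h => (Finset.mem_erase.mp
            (Finset.mem_of_mem_filter i h)).1 rfl)]
          rw [hfe, hz''cnt]
          have : v' a = v a - 1 := by rw [hv']; simp only [Function.update_self]
          omega
        · rw [if_neg (by simp only [Function.update_self]; exact fun h => haa h.symm)]
          rw [hfe, hz''cnt]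
          show Function.update v a0 (v a0 - 1) a = v a
          exact Function.update_of_ne haa _ _

/-- Lemma B: a single congruence move can be realized by a local rewriting of a word. -/
lemma moveStep {w : A → M} {m n : ℕ} (hmn : m ≤ n) (u v t : A → ℕ)
    (hL : ∑ a, u a = ∑ a, v a) (hLm : ∑ a, u a ≤ m)
    (hW : ∑ a, u a • w a = ∑ a, v a • w a)
    (z : Fin n → A) (hz : parikh z = fun a => t a + u a) :
    ∃ z' : Fin n → A, parikh z' = (fun a => t a + v a) ∧ Reach w m z z' := by
  classical
  -- fibers
  set F : A → Finset (Fin n) := fun a => univ.filter fun i => z i = a with hF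
  have hFcard : ∀ a, (F a).card = t a + u a := fun a => congrFun hz a
  have hchoose : ∀ a, ∃ s ⊆ F a, s.card = u a := by
    intro a
    exact Finset.exists_subset_card_eq (by rw [hFcard a]; omega)
  choose Sa hSa hSacard using hchoose
  set S : Finset (Fin n) := univ.biUnion Sa with hS
  have hdisj : ∀ a ∈ (univ : Finset A), ∀ b ∈ (univ : Finset A), a ≠ b →
      Disjoint (Sa a) (Sa b) := by
    intro a _ b _ hab
    refine Finset.disjoint_left.mpr ?_
    intro i hia hib
    have h1 := hSa a hia
    have h2 := hSa b hib
    simp only [hF, Finset.mem_filter] at h1 h2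
    exact hab (h1.2 ▸ h2.2)
  have hScard : S.card = ∑ a, u a := by
    rw [hS, Finset.card_biUnion hdisj]
    exact Finset.sum_congr rfl (fun a _ => hSacard a)
  -- the intersection of S with a fiber is Sa
  have hSF : ∀ a, S ∩ F a = Sa a := by
    intro a
    apply Finset.Subset.antisymm
    · intro i hi
      rw [Finset.mem_inter, hS, Finset.mem_biUnion] at hi
      obtain ⟨⟨b, _, hib⟩, hiF⟩ := hi
      by_cases hab : b = a
      · exact hab ▸ hib
      · exfalso
        have := hSa b hib
        simp only [hF, Finset.mem_filter] at this hiF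
        exact hab (this.2.symm ▸ hiF.2)
    · intro i hi
      rw [Finset.mem_inter]
      exact ⟨by rw [hS, Finset.mem_biUnion]; exact ⟨a, Finset.mem_univ a, hi⟩, hSa a hi⟩
  have hSfilter : ∀ a, (S.filter fun i => z i = a) = Sa a := by
    intro a
    rw [← hSF a]
    ext i
    simp [hF, Finset.mem_inter, Finset.mem_filter, and_comm]
  -- fill
  obtain ⟨z', hz'out, hz'cnt⟩ := exists_fill (∑ a, u a) v S z hL.symm hScard
  refine ⟨z', ?_, ?_⟩
  · funext a
    have hsplit : (univ.filter fun i => z' i = a)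
        = (S.filter fun i => z' i = a) ∪ ((univ \ S).filter fun i => z' i = a) := by
      rw [← Finset.filter_union, Finset.union_sdiff_of_subset (Finset.subset_univ S)]
    have hdisj2 : Disjoint (S.filter fun i => z' i = a)
        ((univ \ S).filter fun i => z' i = a) :=
      Finset.disjoint_filter_filter (Finset.disjoint_sdiff)
    have houtside : ((univ \ S).filter fun i => z' i = a)
        = ((univ \ S).filter fun i => z i = a) := by
      apply Finset.filter_congr
      intro i hi
      rw [hz'out i (Finset.mem_sdiff.mp hi).2]
    have hFsplit : ((univ \ S).filter fun i => z i = a) = F a \ Sa a := by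
      ext i
      simp only [Finset.mem_filter, Finset.mem_sdiff, Finset.mem_univ, true_and, hF]
      constructor
      · rintro ⟨hiS, hz⟩
        refine ⟨by simp [hz], fun h => hiS ?_⟩
        rw [hS, Finset.mem_biUnion]; exact ⟨a, Finset.mem_univ a, h⟩
      · rintro ⟨hiF, hiSa⟩
        refine ⟨fun hiS => hiSa ?_, hiF⟩
        rw [← hSF a, Finset.mem_inter]
        exact ⟨hiS, by simp [hF, hiF]⟩
    have hcards : (F a \ Sa a).card = t a := by
      rw [Finset.card_sdiff_of_subset (hSa a), hFcard a, hSacard a]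
      omega
    show (univ.filter fun i => z' i = a).card = t a + v a
    rw [hsplit, Finset.card_union_of_disjoint hdisj2, hz'cnt a, houtside, hFsplit, hcards]
    omega
  · apply smallStep hmn S (by omega)
    · intro i hi
      exact (hz'out i hi).symm
    · rw [sum_weight_eq w z S, sum_weight_eq w z' S]
      have h1 : ∀ a, (S.filter fun i => z i = a).card = u a := by
        intro a; rw [hSfilter a, hSacard a]
      simp only [h1, hz'cnt]
      exact hW

end PhiCons
end Part3
section Part4

open Finset

namespace PhiCons

variable {A : Type*} [Fintype A] [DecidableEq A] {M : Type*} [AddCommMonoid M]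

/-- Elementary move at the Parikh level, given a set of generating pairs. -/
def moveRel (P : Finset ((A → ℕ) × (A → ℕ))) (p q : A → ℕ) : Prop :=
  ∃ g ∈ P, ∃ t : A → ℕ, (p = t + g.1 ∧ q = t + g.2) ∨ (p = t + g.2 ∧ q = t + g.1)

lemma moveRel_symm {P : Finset ((A → ℕ) × (A → ℕ))} : Symmetric (moveRel P) := by
  rintro p q ⟨g, hg, t, h | h⟩
  · exact ⟨g, hg, t, Or.inr ⟨h.2, h.1⟩⟩
  · exact ⟨g, hg, t, Or.inl ⟨h.2, h.1⟩⟩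

lemma moveRel_add_right {P : Finset ((A → ℕ) × (A → ℕ))} {p q : A → ℕ} (r : A → ℕ)
    (h : moveRel P p q) : moveRel P (p + r) (q + r) := by
  obtain ⟨g, hg, t, h | h⟩ := h
  · exact ⟨g, hg, t + r, Or.inl ⟨by rw [h.1]; ring, by rw [h.2]; ring⟩⟩
  · exact ⟨g, hg, t + r, Or.inr ⟨by rw [h.1]; ring, by rw [h.2]; ring⟩⟩

lemma rtg_moveRel_add_right {P : Finset ((A → ℕ) × (A → ℕ))} {p q : A → ℕ} (r : A → ℕ)
    (h : Relation.ReflTransGen (moveRel P) p q) :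
    Relation.ReflTransGen (moveRel P) (p + r) (q + r) := by
  induction h with
  | refl => exact Relation.ReflTransGen.refl
  | tail _ hstep ih => exact ih.tail (moveRel_add_right r hstep)

/-- The congruence generated by the pairs of `P` implies chain-reachability by moves. -/
lemma chain_of_addConGen {P : Finset ((A → ℕ) × (A → ℕ))} {p q : A → ℕ}
    (h : addConGen (fun u v => (u, v) ∈ P) p q) :
    Relation.ReflTransGen (moveRel P) p q := by
  set con : AddCon (A → ℕ) :=
    AddCon.mk (Setoid.mk (fun p q => Relation.ReflTransGen (moveRel P) p q)
      ⟨fun _ => Relation.ReflTransGen.refl,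
       fun h => by haveI : Std.Symm (moveRel P) := ⟨fun a b h => moveRel_symm h⟩; exact Std.Symm.symm _ _ h,
       fun h1 h2 => h1.trans h2⟩)
      (by
        intro a b c d h1 h2
        have step1 : Relation.ReflTransGen (moveRel P) (a + c) (b + c) :=
          rtg_moveRel_add_right c h1
        have step2 : Relation.ReflTransGen (moveRel P) (b + c) (b + d) := by
          have := rtg_moveRel_add_right b h2
          rwa [add_comm c b, add_comm d b] at this
        exact step1.trans step2) with hcon
  have hle : addConGen (fun u v => (u, v) ∈ P) ≤ con := by
    apply AddCon.addConGen_le.mpr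
    intro u v huv
    refine Relation.ReflTransGen.single ⟨(u, v), huv, 0, Or.inl ⟨?_, ?_⟩⟩
    · simp
    · simp
  exact hle h

/-- Lift a chain of Parikh moves to a chain of word moves. -/
lemma lift_chain {w : A → M} {m n : ℕ} (hmn : m ≤ n)
    (P : Finset ((A → ℕ) × (A → ℕ)))
    (hPlen : ∀ g ∈ P, (∑ a, g.1 a) = ∑ a, g.2 a)
    (hPw : ∀ g ∈ P, (∑ a, g.1 a • w a) = ∑ a, g.2 a • w a)
    (hPm : ∀ g ∈ P, (∑ a, g.1 a) ≤ m) :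
    ∀ {p q : A → ℕ}, Relation.ReflTransGen (moveRel P) p q →
      ∀ z : Fin n → A, parikh z = p → ∃ z', parikh z' = q ∧ Reach w m z z' := by
  intro p q h
  induction h using Relation.ReflTransGen.head_induction_on with
  | refl => exact fun z hz => ⟨z, hz, Relation.ReflTransGen.refl⟩
  | head hstep _ ih =>
      intro z hz
      obtain ⟨g, hg, t, hcase⟩ := hstep
      rcases hcase with ⟨hp, hq⟩ | ⟨hp, hq⟩
      · obtain ⟨z₁, hz₁, hreach⟩ := moveStep hmn g.1 g.2 t (hPlen g hg) (hPm g hg)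
          (hPw g hg) z (by rw [hz, hp]; rfl)
        obtain ⟨z', hz', hreach'⟩ := ih z₁ (by rw [hz₁, hq]; rfl)
        exact ⟨z', hz', hreach.trans hreach'⟩
      · obtain ⟨z₁, hz₁, hreach⟩ := moveStep hmn g.2 g.1 t (hPlen g hg).symm
          (by rw [← hPlen g hg]; exact hPm g hg) (hPw g hg).symm z (by rw [hz, hp]; rfl)
        obtain ⟨z', hz', hreach'⟩ := ih z₁ (by rw [hz₁, hq]; rfl)
        exact ⟨z', hz', hreach.trans hreach'⟩

end PhiCons
end Part4

/-- **Swaps within φ-weight classes generate the φ-conservative group.**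
Let `A` be a finite type, `M` an additive commutative monoid and `w : A → M`.  Then
there exists `m : ℕ` such that for all `n ≥ m`: a permutation `g` of `Fin n → A` is
φ-conservative (preserves the weight `∑ i, w (x i)` of every word) if and only if it
lies in the subgroup of `Perm (Fin n → A)` generated by the transpositions of pairs of
distinct words `x ≠ y` that agree outside some `m`-element subset `S` of the
coordinates and satisfy `∑ i ∈ S, w (x i) = ∑ i ∈ S, w (y i)`. -/
theorem phiConservative_generated_by_local_swaps
    {A : Type*} [Fintype A] [DecidableEq A] {M : Type*} [AddCommMonoid M]
    (w : A → M) :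
    ∃ m : ℕ, ∀ n : ℕ, m ≤ n → ∀ g : Equiv.Perm (Fin n → A),
      g ∈ Subgroup.closure
          {σ : Equiv.Perm (Fin n → A) |
            ∃ (S : Finset (Fin n)) (x y : Fin n → A),
              S.card = m ∧ x ≠ y ∧ (∀ i ∉ S, x i = y i) ∧
              (∑ i ∈ S, w (x i)) = (∑ i ∈ S, w (y i)) ∧
              σ = Equiv.swap x y} ↔
        ∀ x : Fin n → A, phiWeight w (g x) = phiWeight w x := by
  classical
  open Finset PhiCons in
  -- the weight congruence on Parikh vectors
  set cW : AddCon (A → ℕ) :=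
    AddCon.mk (Setoid.mk
      (fun u v => (∑ a, u a) = (∑ a, v a) ∧ (∑ a, u a • w a) = (∑ a, v a • w a))
      ⟨fun _ => ⟨rfl, rfl⟩, fun h => ⟨h.1.symm, h.2.symm⟩,
       fun h1 h2 => ⟨h1.1.trans h2.1, h1.2.trans h2.2⟩⟩)
      (by
        intro a b c d h1 h2
        constructor
        · simp only [Pi.add_apply, Finset.sum_add_distrib]
          rw [h1.1, h2.1]
        · simp only [Pi.add_apply, add_smul, Finset.sum_add_distrib]
          rw [h1.2, h2.2]) with hcW
  obtain ⟨P, hPc, hPgen⟩ := PhiCons.redei cW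
  have hPlen : ∀ g ∈ P, (∑ a, g.1 a) = ∑ a, g.2 a := fun g hg => (hPc g hg).1
  have hPw : ∀ g ∈ P, (∑ a, g.1 a • w a) = ∑ a, g.2 a • w a := fun g hg => (hPc g hg).2
  set m := max 2 (P.sup fun g => ∑ a, g.1 a) with hm
  have h2m : 2 ≤ m := by rw [hm]; exact le_max_left _ _
  have hPm : ∀ g ∈ P, (∑ a, g.1 a) ≤ m := by
    intro g hg
    rw [hm]
    exact le_trans (Finset.le_sup (f := fun g => ∑ a, g.1 a) hg) (le_max_right _ _)
  refine ⟨m, ?_⟩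
  intro n hmn g
  set Gens : Set (Equiv.Perm (Fin n → A)) :=
    {σ : Equiv.Perm (Fin n → A) |
      ∃ (S : Finset (Fin n)) (x y : Fin n → A),
        S.card = m ∧ x ≠ y ∧ (∀ i ∉ S, x i = y i) ∧
        (∑ i ∈ S, w (x i)) = (∑ i ∈ S, w (y i)) ∧
        σ = Equiv.swap x y} with hGens
  -- reachability ⇒ the swap lies in the closure
  have swap_mem : ∀ x y : Fin n → A, PhiCons.Reach w m x y →
      Equiv.swap x y ∈ Subgroup.closure Gens := by
    intro x y h
    induction h using Relation.ReflTransGen.head_induction_on with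
    | refl =>
        rw [Equiv.swap_self]
        exact Subgroup.one_mem _
    | @head a b hab hrest ih =>
        obtain ⟨hne, S, hS, hout, hsum⟩ := hab
        have h1 : Equiv.swap a b ∈ Subgroup.closure Gens :=
          Subgroup.subset_closure ⟨S, a, b, hS, hne, hout, hsum, rfl⟩
        by_cases hby : b = y
        · subst hby; exact h1
        · by_cases hay : a = y
          · rw [hay, Equiv.swap_self]; exact Subgroup.one_mem _
          · have key := Equiv.swap_apply_apply (Equiv.swap a b) b y
            rw [Equiv.swap_apply_right,
              Equiv.swap_apply_of_ne_of_ne (Ne.symm hay) (Ne.symm hby)] at key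
            rw [key]
            exact mul_mem (mul_mem h1 ih) (inv_mem h1)
  -- generators are conservative
  have gen_cons : ∀ σ ∈ Gens, ∀ x : Fin n → A, phiWeight w (σ x) = phiWeight w x := by
    rintro σ ⟨S, u, v, hS, hne, hout, hsum, rfl⟩ x
    have huv : phiWeight w u = phiWeight w v := by
      unfold phiWeight
      rw [← Finset.sum_add_sum_compl S (fun i => w (u i)),
        ← Finset.sum_add_sum_compl S (fun i => w (v i)), hsum]
      congr 1
      refine Finset.sum_congr rfl ?_
      intro i hi
      rw [hout i (Finset.mem_compl.mp hi)]
    by_cases hx : x = u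
    · subst hx; rw [Equiv.swap_apply_left]; exact huv.symm
    · by_cases hy : x = v
      · subst hy; rw [Equiv.swap_apply_right]; exact huv
      · rw [Equiv.swap_apply_of_ne_of_ne hx hy]
  constructor
  · intro hmem
    exact Subgroup.closure_induction
      (p := fun g _ => ∀ x : Fin n → A, phiWeight w (g x) = phiWeight w x)
      (fun σ hσ => gen_cons σ hσ)
      (fun x => rfl)
      (fun a b _ _ ha hb x => (ha (b x)).trans (hb x))
      (fun a _ ha x => by
        have := ha (a⁻¹ x)
        rw [← Equiv.Perm.mul_apply, mul_inv_cancel, Equiv.Perm.one_apply] at this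
        exact this.symm)
      hmem
  · intro hcons
    have reach_weight : ∀ x y : Fin n → A, phiWeight w x = phiWeight w y →
        PhiCons.Reach w m x y := by
      intro x y hw
      have hc : cW (PhiCons.parikh x) (PhiCons.parikh y) := by
        constructor
        · rw [PhiCons.sum_parikh, PhiCons.sum_parikh]
        · show (∑ a, PhiCons.parikh x a • w a) = ∑ a, PhiCons.parikh y a • w a
          unfold PhiCons.parikh
          rw [← PhiCons.sum_weight_eq w x Finset.univ, ← PhiCons.sum_weight_eq w y Finset.univ]
          exact hw
      have hgen' : (addConGen fun u v => (u, v) ∈ P) (PhiCons.parikh x) (PhiCons.parikh y) := by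
        rw [hPgen]; exact hc
      obtain ⟨z', hz', hreach⟩ := PhiCons.lift_chain hmn P hPlen hPw hPm
        (PhiCons.chain_of_addConGen hgen') x rfl
      refine hreach.trans (PhiCons.reach_of_parikh_eq h2m hmn n z' y ?_ hz')
      calc (Finset.univ.filter fun i => z' i ≠ y i).card
          ≤ (Finset.univ : Finset (Fin n)).card := Finset.card_filter_le _ _
        _ = n := by simp
    have key : ∀ (k : ℕ) (g : Equiv.Perm (Fin n → A)),
        (Finset.univ.filter fun x => g x ≠ x).card ≤ k →
        (∀ x, phiWeight w (g x) = phiWeight w x) → g ∈ Subgroup.closure Gens := by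
      intro k
      induction k with
      | zero =>
          intro g hcard _
          have hg1 : g = 1 := by
            ext x
            by_contra hx
            have hmem : x ∈ Finset.univ.filter fun y => g y ≠ y := by
              simp only [Finset.mem_filter, Finset.mem_univ, true_and]
              exact fun h => hx (by simp [h])
            have := Finset.card_pos.mpr ⟨x, hmem⟩
            omega
          rw [hg1]; exact Subgroup.one_mem _
      | succ k ih =>
          intro g hcard hcons'
          by_cases hg1 : g = 1
          · rw [hg1]; exact Subgroup.one_mem _
          · have hex : ∃ x, g x ≠ x := by
              by_contra h
              push_neg at h
              exact hg1 (Equiv.ext fun x => h x)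
            obtain ⟨x, hx⟩ := hex
            set τ := Equiv.swap x (g x) with hτdef
            have hτ : τ ∈ Subgroup.closure Gens :=
              swap_mem x (g x) (reach_weight x (g x) (hcons' x).symm)
            have hτcons : ∀ s, phiWeight w (τ s) = phiWeight w s := by
              intro s
              rw [hτdef]
              by_cases hsx : s = x
              · subst hsx; rw [Equiv.swap_apply_left]; exact hcons' s
              · by_cases hsg : s = g x
                · subst hsg; rw [Equiv.swap_apply_right]; exact (hcons' x).symm
                · rw [Equiv.swap_apply_of_ne_of_ne hsx hsg]
            set g' := τ * g with hg'
            have hg'cons : ∀ s, phiWeight w (g' s) = phiWeight w s := by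
              intro s
              rw [hg']
              exact (hτcons (g s)).trans (hcons' s)
            have hsub : (Finset.univ.filter fun y => g' y ≠ y)
                ⊆ (Finset.univ.filter fun y => g y ≠ y).erase x := by
              intro y hy
              simp only [Finset.mem_filter, Finset.mem_univ, true_and] at hy
              rw [Finset.mem_erase]
              constructor
              · rintro rfl
                apply hy
                rw [hg', hτdef]
                simp [Equiv.swap_apply_right]
              · simp only [Finset.mem_filter, Finset.mem_univ, true_and]
                intro hgy
                apply hy
                rw [hg', hτdef]
                have hyx : y ≠ x := by
                  rintro rfl
                  exact hx hgy
                have hygx : y ≠ g x := by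
                  rintro rfl
                  exact hyx (g.injective hgy)
                show Equiv.swap x (g x) (g y) = y
                rw [hgy, Equiv.swap_apply_of_ne_of_ne hyx hygx]
            have hcard' : (Finset.univ.filter fun y => g' y ≠ y).card ≤ k := by
              have h1 := Finset.card_le_card hsub
              have hxm : x ∈ Finset.univ.filter fun y => g y ≠ y := by
                simp only [Finset.mem_filter, Finset.mem_univ, true_and]; exact hx
              have h3 := Finset.card_erase_of_mem hxm
              omega
            have hmem' := ih g' hcard' hg'cons
            have hfinal : g = τ * g' := by
              rw [hg', ← mul_assoc, hτdef, Equiv.swap_mul_self, one_mul]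
            rw [hfinal]
            exact mul_mem hτ hmem'
    exact key (Fintype.card (Fin n → A)) g
      (le_trans (Finset.card_filter_le _ _) (le_of_eq (Finset.card_univ))) hcons
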